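/- Let n ≥ 1. If C is an n×n random real matrix whose diagonal entries are all fixed equal to 1 and whose off-diagonal entries are independent, each distributed according to a Borel probability measure on ℝ that is atomless off 0, then the probability of the event {det C = 1 and there exists a non-identity permutation σ of {1,…,n} with ∏_{i=1}^n C_{σ(i),i} ≠ 0} is 0. -/

import Mathlib

open MeasureTheory Finset

lemma measurable_polyform {ι : Type*} [Fintype ι] (N : Finset (Finset ι)) (c : Finset ι → ℝ) :
    Measurable (fun x : ι → ℝ => ∑ m ∈ N, c m * ∏ e ∈ m, x e) :=
  Finset.measurable_sum _ fun m _ =>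
    (measurable_const.mul (Finset.measurable_prod _ fun e _ => measurable_pi_apply e))

lemma key_lemma {ι : Type*} [Fintype ι] [DecidableEq ι]
    (μ : ι → Measure ℝ) [hP : ∀ e, IsProbabilityMeasure (μ e)] :
    ∀ (s : Finset ι), (∀ e ∈ s, ∀ x : ℝ, x ≠ 0 → μ e {x} = 0) →
    ∀ (M : Finset (Finset ι)) (c : Finset ι → ℝ),
      (∀ m ∈ M, m ⊆ s) → (∀ m ∈ M, c m ≠ 0) → M.Nonempty →
    Measure.pi μ {x | (∑ m ∈ M, c m * ∏ e ∈ m, x e) = 0 ∧ ∀ e ∈ s, x e ≠ 0} = 0 := by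
  classical
  intro s
  induction s using Finset.strongInduction with
  | _ s IH =>
    intro hs M c hMs hc hne
    by_cases hex : ∃ m ∈ M, m.Nonempty
    · obtain ⟨m0, hm0M, he0m⟩ := hex
      obtain ⟨e, he0⟩ := he0m
      have he : e ∈ s := hMs m0 hm0M he0
      set M1 : Finset (Finset ι) := M.filter (fun m => e ∈ m) with hM1
      set M0 : Finset (Finset ι) := M.filter (fun m => e ∉ m) with hM0def
      set M1' : Finset (Finset ι) := M1.image (fun m => m.erase e) with hM1'
      set c' : Finset ι → ℝ := fun m => c (insert e m) with hc'
      set f0 : (ι → ℝ) → ℝ := fun x => ∑ m ∈ M0, c m * ∏ e' ∈ m, x e' with hf0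
      set f1 : (ι → ℝ) → ℝ := fun x => ∑ m ∈ M1, c m * ∏ e' ∈ m.erase e, x e' with hf1
      -- injectivity of erase on M1
      have herase_inj : ∀ m ∈ M1, ∀ m' ∈ M1, m.erase e = m'.erase e → m = m' := by
        intro m hm m' hm' h
        have hem : e ∈ m := (Finset.mem_filter.mp hm).2
        have hem' : e ∈ m' := (Finset.mem_filter.mp hm').2
        rw [← Finset.insert_erase hem, ← Finset.insert_erase hem', h]
      -- f1 as a polyform over M1'
      have hf1eq : ∀ x : ι → ℝ, (∑ m ∈ M1', c' m * ∏ e' ∈ m, x e') = f1 x := by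
        intro x
        rw [hM1', Finset.sum_image herase_inj]
        refine Finset.sum_congr rfl fun m hm => ?_
        simp only [hc']
        rw [Finset.insert_erase ((Finset.mem_filter.mp hm).2)]
      -- decomposition
      have hsplit : ∀ x : ι → ℝ,
          (∑ m ∈ M, c m * ∏ e' ∈ m, x e') = f0 x + x e * f1 x := by
        intro x
        rw [hf0, hf1, Finset.mul_sum]
        rw [← Finset.sum_filter_add_sum_filter_not M (fun m => e ∈ m)
          (fun m => c m * ∏ e' ∈ m, x e')]
        rw [add_comm]
        congr 1
        refine Finset.sum_congr rfl fun m hm => ?_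
        have hem : e ∈ m := (Finset.mem_filter.mp hm).2
        rw [← Finset.mul_prod_erase m _ hem]; ring
      -- part A : measure zero by induction
      have hA : Measure.pi μ
          {x | (∑ m ∈ M1', c' m * ∏ e' ∈ m, x e') = 0 ∧ ∀ e' ∈ s.erase e, x e' ≠ 0} = 0 := by
        refine IH (s.erase e) (Finset.erase_ssubset he)
          (fun e' he' x hx => hs e' (Finset.mem_of_mem_erase he') x hx) M1' c' ?_ ?_ ?_
        · intro m hm
          obtain ⟨m', hm', rfl⟩ := Finset.mem_image.mp hm
          exact Finset.erase_subset_erase e (hMs m' (Finset.mem_filter.mp hm').1)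
        · intro m hm
          obtain ⟨m', hm', rfl⟩ := Finset.mem_image.mp hm
          simp only [hc']
          rw [Finset.insert_erase ((Finset.mem_filter.mp hm').2)]
          exact hc m' (Finset.mem_filter.mp hm').1
        · exact ⟨m0.erase e, Finset.mem_image.mpr ⟨m0, Finset.mem_filter.mpr ⟨hm0M, he0⟩, rfl⟩⟩
      -- part B : Fubini
      set B : Set (ι → ℝ) := {x | f1 x ≠ 0 ∧ f0 x + x e * f1 x = 0 ∧ x e ≠ 0} with hBdef
      have hmf0 : Measurable f0 := measurable_polyform M0 c
      have hmf1 : Measurable (fun x : ι → ℝ => ∑ m ∈ M1, c m * ∏ e' ∈ m.erase e, x e') :=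
        Finset.measurable_sum _ fun m _ =>
          (measurable_const.mul (Finset.measurable_prod _ fun e' _ => measurable_pi_apply e'))
      have hmB : MeasurableSet B := by
        have h1 : MeasurableSet {x : ι → ℝ | f1 x ≠ 0} :=
          (hmf1 (measurableSet_singleton 0)).compl
        have h2 : MeasurableSet {x : ι → ℝ | f0 x + x e * f1 x = 0} :=
          (hmf0.add ((measurable_pi_apply e).mul hmf1)) (measurableSet_singleton 0)
        have h3 : MeasurableSet {x : ι → ℝ | x e ≠ 0} :=
          ((measurable_pi_apply e) (measurableSet_singleton 0)).compl
        exact (h1.inter (h2.inter h3) : _)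
      have hB : Measure.pi μ B = 0 := by
        set p : ι → Prop := fun i => i = e with hp
        haveI : DecidablePred p := fun i => inferInstanceAs (Decidable (i = e))
        haveI : Unique {i // p i} := ⟨⟨⟨e, rfl⟩⟩, fun a => Subtype.ext a.2⟩
        have hfam : (fun i : {i // p i} => μ (i : ι)) = fun _ : {i // p i} => μ e :=
          funext fun i => congrArg μ i.2
        set T := MeasurableEquiv.piEquivPiSubtypeProd (fun _ : ι => ℝ) p with hT
        have hmp := measurePreserving_piEquivPiSubtypeProd μ p
        have hBT : MeasurableSet (⇑T.symm ⁻¹' B) := T.symm.measurable hmB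
        have h1 := hmp.measure_preimage hBT.nullMeasurableSet
        have h2 : ⇑(MeasurableEquiv.piEquivPiSubtypeProd (fun _ : ι => ℝ) p) ⁻¹' (⇑T.symm ⁻¹' B)
            = B := by
          ext x
          simp only [Set.mem_preimage]
          rw [show (⇑T.symm) ((MeasurableEquiv.piEquivPiSubtypeProd (fun _ : ι => ℝ) p) x)
            = x from T.symm_apply_apply x]
        rw [h2] at h1
        rw [h1, Measure.prod_apply_symm hBT]
        have hMeq : (@Measure.pi (Subtype p) (fun _ => ℝ) (Subtype.fintype p)
              (fun _ => Real.measurableSpace) fun i => μ (i : ι))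
            = Measure.pi (fun i : Subtype p => μ (i : ι)) :=
          congrArg (fun F : Fintype (Subtype p) => @Measure.pi (Subtype p) (fun _ => ℝ) F
              (fun _ => Real.measurableSpace) fun i => μ (i : ι)) (Subsingleton.elim _ _)
        simp only [hMeq]
        have hzero : ∀ y : {i // ¬ p i} → ℝ,
            (Measure.pi fun i : {i // p i} => μ (i : ι))
              ((fun z => (z, y)) ⁻¹' (⇑T.symm ⁻¹' B)) = 0 := by
          intro y
          set x0 : ι → ℝ := fun i => if h : i = e then 0 else y ⟨i, h⟩ with hx0
          have hcoord : ∀ (z : {i // p i} → ℝ) (e' : ι), e' ≠ e →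
              T.symm (z, y) e' = x0 e' := by
            intro z e' he'
            show (Equiv.piEquivPiSubtypeProd p (fun _ : ι => ℝ)).symm (z, y) e' = x0 e'
            rw [Equiv.piEquivPiSubtypeProd_symm_apply, hx0]
            simp [show ¬ p e' from he', he']
          have hcoorde : ∀ z : {i // p i} → ℝ, T.symm (z, y) e = z ⟨e, rfl⟩ := by
            intro z
            show (Equiv.piEquivPiSubtypeProd p (fun _ : ι => ℝ)).symm (z, y) e = _
            rw [Equiv.piEquivPiSubtypeProd_symm_apply]
            simp [show p e from rfl]
          have hf0c : ∀ z : {i // p i} → ℝ, f0 (T.symm (z, y)) = f0 x0 := by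
            intro z
            refine Finset.sum_congr rfl fun m hm => ?_
            have hem : e ∉ m := (Finset.mem_filter.mp hm).2
            congr 1
            refine Finset.prod_congr rfl fun e' he' => ?_
            exact hcoord z e' (fun h => hem (h ▸ he'))
          have hf1c : ∀ z : {i // p i} → ℝ, f1 (T.symm (z, y)) = f1 x0 := by
            intro z
            refine Finset.sum_congr rfl fun m hm => ?_
            congr 1
            refine Finset.prod_congr rfl fun e' he' => ?_
            exact hcoord z e' (Finset.ne_of_mem_erase he')
          by_cases h1 : f1 x0 = 0
          · convert measure_empty (μ := Measure.pi fun i : {i // p i} => μ (i : ι))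
            ext z
            simp only [Set.mem_preimage, hBdef, Set.mem_setOf_eq, Set.mem_empty_iff_false,
              iff_false, not_and]
            intro hz
            exact absurd (hf1c z ▸ h1) hz
          · set t0 : ℝ := -f0 x0 / f1 x0 with ht0
            have hsub : ((fun z => (z, y)) ⁻¹' (⇑T.symm ⁻¹' B)) ⊆
                {z : {i // p i} → ℝ | z ⟨e, rfl⟩ = t0 ∧ z ⟨e, rfl⟩ ≠ 0} := by
              intro z hz
              obtain ⟨hz1, hz2, hz3⟩ := hz
              rw [hf0c z, hf1c z, hcoorde z] at hz2
              rw [hcoorde z] at hz3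
              constructor
              · rw [ht0]
                field_simp
                linarith
              · exact hz3
            by_cases h2 : t0 = 0
            · refine measure_mono_null hsub ?_
              convert measure_empty (μ := Measure.pi fun i : {i // p i} => μ (i : ι))
              ext z
              simp only [Set.mem_setOf_eq, Set.mem_empty_iff_false, iff_false, not_and]
              intro hz; rw [hz, h2]; simp
            · have hsub2 : {z : {i // p i} → ℝ | z ⟨e, rfl⟩ = t0 ∧ z ⟨e, rfl⟩ ≠ 0} ⊆
                  {z : {i // p i} → ℝ | z ⟨e, rfl⟩ = t0} := fun z hz => hz.1
              refine measure_mono_null (hsub.trans hsub2) ?_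
              · show (Measure.pi fun i : {i // p i} => μ (i : ι))
                  {z : {i // p i} → ℝ | z ⟨e, rfl⟩ = t0} = 0
                have hPU := measurePreserving_piUnique (fun i : {i // p i} => μ (i : ι))
                have hd : (default : {i // p i}) = ⟨e, rfl⟩ :=
                  Subtype.ext (default : {i // p i}).2
                have hset : {z : {i // p i} → ℝ | z ⟨e, rfl⟩ = t0} =
                    (MeasurableEquiv.piUnique (fun _ : {i // p i} => ℝ)) ⁻¹' {t0} := by
                  ext z
                  simp only [Set.mem_setOf_eq, Set.mem_preimage,
                    MeasurableEquiv.piUnique_apply, Set.mem_singleton_iff, hd]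
                rw [hset, hPU.measure_preimage (measurableSet_singleton t0).nullMeasurableSet]
                have hd2 : ((default : {i // p i}) : ι) = e := (default : {i // p i}).2
                rw [hd2]
                exact hs e he t0 h2
        exact (lintegral_congr hzero).trans lintegral_zero
      -- combine
      refine measure_mono_null ?_ (measure_union_null hA hB)
      intro x hx
      obtain ⟨hsum, hnz⟩ := hx
      rw [hsplit x] at hsum
      by_cases h1 : f1 x = 0
      · left
        refine ⟨by rw [hf1eq x]; exact h1, fun e' he' => hnz e' (Finset.mem_of_mem_erase he')⟩
      · right
        exact ⟨h1, hsum, hnz e he⟩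
    · -- all monomials empty
      push_neg at hex
      have hM : M = {∅} := by
        apply Finset.eq_singleton_iff_nonempty_unique_mem.mpr
        exact ⟨hne, fun m hm => hex m hm⟩
      convert measure_empty (μ := Measure.pi μ)
      ext x
      simp only [Set.mem_setOf_eq, Set.mem_empty_iff_false, iff_false, not_and]
      intro h
      rw [hM] at h
      simp only [Finset.sum_singleton, Finset.prod_empty, mul_one] at h
      exact absurd h (hc ∅ (by rw [hM]; exact Finset.mem_singleton_self ∅))
section MainPart
open MeasureTheory Finset
open scoped Classical

noncomputable section

variable {n : ℕ}

/-- The off-diagonal "support" of a permutation, as a set of matrix positions. -/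
def suppF (σ : Equiv.Perm (Fin n)) : Finset (Fin n × Fin n) :=
  (Finset.univ.filter fun i => σ i ≠ i).image fun i => (σ i, i)

lemma mem_suppF {σ : Equiv.Perm (Fin n)} {e : Fin n × Fin n} :
    e ∈ suppF σ ↔ σ e.2 = e.1 ∧ e.1 ≠ e.2 := by
  constructor
  · intro h
    obtain ⟨i, hi, heq⟩ := Finset.mem_image.mp h
    have hi' : σ i ≠ i := (Finset.mem_filter.mp hi).2
    subst heq
    exact ⟨rfl, hi'⟩
  · rintro ⟨h1, h2⟩
    refine Finset.mem_image.mpr ⟨e.2, Finset.mem_filter.mpr ⟨Finset.mem_univ _, ?_⟩, ?_⟩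
    · rw [h1]; exact h2
    · rw [h1]

lemma suppF_inj {σ τ : Equiv.Perm (Fin n)} (h : suppF σ = suppF τ) : σ = τ := by
  apply Equiv.ext
  intro i
  by_cases h1 : σ i = i
  · by_cases h2 : τ i = i
    · rw [h1, h2]
    · have : (τ i, i) ∈ suppF τ := mem_suppF.mpr ⟨rfl, h2⟩
      rw [← h] at this
      exact (mem_suppF.mp this).1
  · have : (σ i, i) ∈ suppF σ := mem_suppF.mpr ⟨rfl, h1⟩
    rw [h] at this
    exact ((mem_suppF.mp this).1).symm

lemma suppF_one : suppF (1 : Equiv.Perm (Fin n)) = ∅ := by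
  simp [suppF]

/-- off-diagonal positions -/
def offdiag' (n : ℕ) : Finset (Fin n × Fin n) :=
  Finset.univ.filter fun e => e.1 ≠ e.2

lemma suppF_subset_offdiag (σ : Equiv.Perm (Fin n)) : suppF σ ⊆ offdiag' n := by
  intro e he
  exact Finset.mem_filter.mpr ⟨Finset.mem_univ _, (mem_suppF.mp he).2⟩

def sgn (σ : Equiv.Perm (Fin n)) : ℝ := ((Equiv.Perm.sign σ : ℤ) : ℝ)

lemma sgn_ne_zero (σ : Equiv.Perm (Fin n)) : sgn σ ≠ 0 := by
  rcases Int.units_eq_one_or (Equiv.Perm.sign σ) with h | h <;> simp [sgn, h]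

def signOf (m : Finset (Fin n × Fin n)) : ℝ :=
  if h : ∃ σ : Equiv.Perm (Fin n), suppF σ = m then sgn h.choose else 0

lemma signOf_suppF (σ : Equiv.Perm (Fin n)) : signOf (suppF σ) = sgn σ := by
  have h : ∃ τ : Equiv.Perm (Fin n), suppF τ = suppF σ := ⟨σ, rfl⟩
  rw [signOf, dif_pos h, suppF_inj h.choose_spec]

/-- surviving monomials -/
def Ms (s : Finset (Fin n × Fin n)) : Finset (Finset (Fin n × Fin n)) :=
  (Finset.univ.filter fun σ : Equiv.Perm (Fin n) => σ ≠ 1 ∧ suppF σ ⊆ s).image suppF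

lemma prod_suppF_eq (x : Fin n × Fin n → ℝ) (hx : ∀ i : Fin n, x (i, i) = 1)
    (σ : Equiv.Perm (Fin n)) :
    ∏ i, x (σ i, i) = ∏ e ∈ suppF σ, x e := by
  rw [suppF, Finset.prod_image (fun i _ j _ h => by
    have := (Prod.ext_iff.mp h).2; exact this)]
  rw [← Finset.prod_filter_mul_prod_filter_not Finset.univ (fun i => σ i ≠ i)
    (fun i => x (σ i, i))]
  have h2 : (∏ i ∈ Finset.univ.filter (fun i => ¬ σ i ≠ i), x (σ i, i)) = 1 := by
    refine Finset.prod_eq_one fun i hi => ?_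
    have : σ i = i := not_not.mp (Finset.mem_filter.mp hi).2
    rw [this, hx i]
  rw [h2, mul_one]

lemma det_eq_offdiag_sum (x : Fin n × Fin n → ℝ) (hx : ∀ i : Fin n, x (i, i) = 1)
    (s : Finset (Fin n × Fin n)) (hsx : ∀ e ∈ offdiag' n, e ∉ s → x e = 0) :
    (Matrix.of fun i j : Fin n => x (i, j)).det
      = 1 + ∑ m ∈ Ms s, signOf m * ∏ e ∈ m, x e := by
  rw [Matrix.det_apply']
  have h0 : (∑ σ : Equiv.Perm (Fin n), ((Equiv.Perm.sign σ : ℤ) : ℝ)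
        * ∏ i, (Matrix.of fun i j : Fin n => x (i, j)) (σ i) i)
      = ∑ σ : Equiv.Perm (Fin n), sgn σ * ∏ e ∈ suppF σ, x e := by
    refine Finset.sum_congr rfl fun σ _ => ?_
    rw [show (∏ i, (Matrix.of fun i j : Fin n => x (i, j)) (σ i) i) = ∏ i, x (σ i, i) from rfl,
      prod_suppF_eq x hx σ]
    rfl
  rw [h0, ← Finset.add_sum_erase Finset.univ _ (Finset.mem_univ (1 : Equiv.Perm (Fin n)))]
  have hterm1 : sgn (1 : Equiv.Perm (Fin n)) * ∏ e ∈ suppF (1 : Equiv.Perm (Fin n)), x e = 1 := by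
    rw [suppF_one, Finset.prod_empty, mul_one]; simp [sgn]
  rw [hterm1]
  congr 1
  have h3 : (∑ m ∈ Ms s, signOf m * ∏ e ∈ m, x e)
      = ∑ σ ∈ Finset.univ.filter (fun σ : Equiv.Perm (Fin n) => σ ≠ 1 ∧ suppF σ ⊆ s),
          sgn σ * ∏ e ∈ suppF σ, x e := by
    rw [Ms, Finset.sum_image (fun a _ b _ h => suppF_inj h)]
    exact Finset.sum_congr rfl fun σ _ => by rw [signOf_suppF]
  rw [h3]
  refine (Finset.sum_subset ?_ ?_).symm
  · intro σ hσ
    exact Finset.mem_erase.mpr ⟨(Finset.mem_filter.mp hσ).2.1, Finset.mem_univ _⟩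
  · intro σ hσ hσP
    have hσ1 : σ ≠ 1 := (Finset.mem_erase.mp hσ).1
    have hns : ¬ suppF σ ⊆ s := by
      intro hss
      exact hσP (Finset.mem_filter.mpr ⟨Finset.mem_univ _, hσ1, hss⟩)
    obtain ⟨e, hes, hens⟩ := Finset.not_subset.mp hns
    have hxe : x e = 0 := hsx e (suppF_subset_offdiag σ hes) hens
    rw [Finset.prod_eq_zero hes hxe, mul_zero]

end
end MainPart

/-- For a random `n × n` real matrix of type `C_n` — all diagonal entries
are (almost surely) fixed equal to `1`, and the off-diagonal entries are independent with
laws that are atomless off `0` — the event that `det C = 1` while some non-diagonal term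
of the permutation expansion of the determinant is nonzero has probability `0`. -/
theorem typeC_det_one_with_nonzero_offdiag_term_prob_zero
    (n : ℕ) (hn : 1 ≤ n)
    (μ : Fin n → Fin n → Measure ℝ)
    [∀ i j, IsProbabilityMeasure (μ i j)]
    (hfixed : ∀ i : Fin n, μ i i = Measure.dirac 1)
    (hatomless : ∀ i j : Fin n, i ≠ j → ∀ x : ℝ, x ≠ 0 → μ i j {x} = 0) :
    Measure.pi (fun i => Measure.pi (fun j => μ i j))
      {C : Fin n → Fin n → ℝ | (Matrix.of C).det = 1 ∧
        ∃ σ : Equiv.Perm (Fin n), σ ≠ 1 ∧ (∏ i, C (σ i) i) ≠ 0} = 0 := by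
  classical
  set μ' : Fin n × Fin n → Measure ℝ := fun e => μ e.1 e.2 with hμ'
  haveI : ∀ e : Fin n × Fin n, IsProbabilityMeasure (μ' e) :=
    fun e => inferInstanceAs (IsProbabilityMeasure (μ e.1 e.2))
  set f : (Fin n → Fin n → ℝ) → (Fin n × Fin n → ℝ) := fun C e => C e.1 e.2 with hfdef
  have hfm : Measurable f :=
    measurable_pi_lambda _ fun e => (measurable_pi_apply e.2).comp (measurable_pi_apply e.1)
  -- transfer of the product measure
  have hmap : Measure.pi μ'
      = Measure.map f (Measure.pi fun i => Measure.pi fun j => μ i j) := by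
    refine Measure.pi_eq fun t ht => ?_
    rw [Measure.map_apply hfm (MeasurableSet.univ_pi ht)]
    have hpre : f ⁻¹' (Set.univ.pi t) = Set.univ.pi fun i => Set.univ.pi fun j => t (i, j) := by
      ext C
      simp only [Set.mem_preimage, Set.mem_univ_pi]
      exact ⟨fun h i j => h (i, j), fun h e => h e.1 e.2⟩
    rw [hpre, Measure.pi_pi]
    simp_rw [Measure.pi_pi]
    exact (Fintype.prod_prod_type' fun i j => μ' (i, j) (t (i, j))).symm
  set A : Set (Fin n × Fin n → ℝ) := {x | (Matrix.of fun i j : Fin n => x (i, j)).det = 1 ∧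
      ∃ σ : Equiv.Perm (Fin n), σ ≠ 1 ∧ (∏ i, x (σ i, i)) ≠ 0} with hAdef
  have hdetm : Measurable fun x : Fin n × Fin n → ℝ =>
      (Matrix.of fun i j : Fin n => x (i, j)).det := by
    have hrw : (fun x : Fin n × Fin n → ℝ => (Matrix.of fun i j : Fin n => x (i, j)).det)
        = fun x => ∑ σ : Equiv.Perm (Fin n), sgn σ * ∏ i, x (σ i, i) := by
      funext x; rw [Matrix.det_apply']; rfl
    rw [hrw]
    exact Finset.measurable_sum _ fun σ _ =>
      measurable_const.mul (Finset.measurable_prod _ fun i _ => measurable_pi_apply _)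
  have hAm : MeasurableSet A := by
    refine MeasurableSet.inter (hdetm (measurableSet_singleton 1)) ?_
    show MeasurableSet {x : Fin n × Fin n → ℝ |
      ∃ σ : Equiv.Perm (Fin n), σ ≠ 1 ∧ (∏ i, x (σ i, i)) ≠ 0}
    have hsetrw : {x : Fin n × Fin n → ℝ |
          ∃ σ : Equiv.Perm (Fin n), σ ≠ 1 ∧ (∏ i, x (σ i, i)) ≠ 0}
        = ⋃ σ ∈ {σ : Equiv.Perm (Fin n) | σ ≠ 1}, {x | (∏ i, x (σ i, i)) ≠ 0} := by
      ext x
      simp only [Set.mem_setOf_eq, Set.mem_iUnion, exists_prop]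
    rw [hsetrw]
    refine MeasurableSet.biUnion (Set.to_countable _) fun σ _ => ?_
    have hmprod : Measurable fun x : Fin n × Fin n → ℝ => ∏ i, x (σ i, i) :=
      Finset.measurable_prod _ fun i _ => measurable_pi_apply _
    exact (hmprod (measurableSet_singleton (0 : ℝ))).compl
  have hPA : Measure.pi μ' A
      = Measure.pi (fun i => Measure.pi fun j => μ i j)
        {C : Fin n → Fin n → ℝ | (Matrix.of C).det = 1 ∧
          ∃ σ : Equiv.Perm (Fin n), σ ≠ 1 ∧ (∏ i, C (σ i) i) ≠ 0} := by
    rw [hmap, Measure.map_apply hfm hAm]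
    rfl
  rw [← hPA]
  -- the diagonal-ones event has full measure
  have heval : ∀ (e : Fin n × Fin n) (s : Set ℝ), MeasurableSet s →
      Measure.pi μ' (Function.eval e ⁻¹' s) = μ' e s := by
    intro e s hs
    rw [Set.eval_preimage, Measure.pi_pi]
    rw [Fintype.prod_eq_single e
      (fun p hp => by rw [Function.update_of_ne hp]; exact measure_univ)]
    rw [Function.update_self]
  set D : Set (Fin n × Fin n → ℝ) := {x | ∀ i : Fin n, x (i, i) = 1} with hDdef
  have hDc : Measure.pi μ' Dᶜ = 0 := by
    have hsub : Dᶜ ⊆ ⋃ i : Fin n, Function.eval (i, i) ⁻¹' ({1}ᶜ : Set ℝ) := by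
      intro x hx
      simp only [hDdef, Set.mem_compl_iff, Set.mem_setOf_eq, not_forall] at hx
      obtain ⟨i, hi⟩ := hx
      exact Set.mem_iUnion.mpr ⟨i, hi⟩
    refine measure_mono_null hsub (measure_iUnion_null fun i => ?_)
    rw [heval (i, i) _ (measurableSet_singleton 1).compl]
    show μ i i {(1 : ℝ)}ᶜ = 0
    rw [hfixed i]
    rw [Measure.dirac_apply' _ (measurableSet_singleton 1).compl]
    simp
  -- the union of the exceptional events
  set F : Finset (Finset (Fin n × Fin n)) :=
    (offdiag' n).powerset.filter (fun s => (Ms s).Nonempty) with hFdef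
  set Es : Finset (Fin n × Fin n) → Set (Fin n × Fin n → ℝ) := fun s =>
    {x | (∑ m ∈ Ms s, signOf m * ∏ e ∈ m, x e) = 0 ∧ ∀ e ∈ s, x e ≠ 0} with hEsdef
  have hEs0 : ∀ s ∈ F, Measure.pi μ' (Es s) = 0 := by
    intro s hsF
    obtain ⟨hpow, hMne⟩ := Finset.mem_filter.mp hsF
    have hssub : s ⊆ offdiag' n := Finset.mem_powerset.mp hpow
    refine key_lemma μ' s ?_ (Ms s) signOf ?_ ?_ hMne
    · intro e hes x hx
      have hne : e.1 ≠ e.2 := (Finset.mem_filter.mp (hssub hes)).2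
      exact hatomless e.1 e.2 hne x hx
    · intro m hm
      obtain ⟨σ, hσ, rfl⟩ := Finset.mem_image.mp hm
      exact (Finset.mem_filter.mp hσ).2.2
    · intro m hm
      obtain ⟨σ, hσ, rfl⟩ := Finset.mem_image.mp hm
      rw [signOf_suppF]; exact sgn_ne_zero σ
  have hsubA : A ⊆ Dᶜ ∪ ⋃ s ∈ (F : Set (Finset (Fin n × Fin n))), Es s := by
    intro x hxA
    by_cases hxD : x ∈ D
    · right
      obtain ⟨hdet1, σ, hσ1, hσp⟩ := hxA
      set s : Finset (Fin n × Fin n) := (offdiag' n).filter (fun e => x e ≠ 0) with hsdef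
      have hxdiag : ∀ i : Fin n, x (i, i) = 1 := hxD
      have hprod : (∏ e ∈ suppF σ, x e) ≠ 0 := by
        rw [← prod_suppF_eq x hxdiag σ]; exact hσp
      have hss : suppF σ ⊆ s := by
        intro e he
        refine Finset.mem_filter.mpr ⟨suppF_subset_offdiag σ he, ?_⟩
        exact Finset.prod_ne_zero_iff.mp hprod e he
      have hMne : (Ms s).Nonempty :=
        ⟨suppF σ, Finset.mem_image.mpr
          ⟨σ, Finset.mem_filter.mpr ⟨Finset.mem_univ _, hσ1, hss⟩, rfl⟩⟩
      have hsF : s ∈ F := Finset.mem_filter.mpr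
        ⟨Finset.mem_powerset.mpr (Finset.filter_subset _ _), hMne⟩
      refine Set.mem_biUnion hsF ⟨?_, ?_⟩
      · have hdet2 := det_eq_offdiag_sum x hxdiag s (fun e heo hes => by
          by_contra hxe
          exact hes (Finset.mem_filter.mpr ⟨heo, hxe⟩))
        rw [hdet2] at hdet1
        linarith
      · intro e hes
        exact (Finset.mem_filter.mp hes).2
    · left; exact hxD
  refine measure_mono_null hsubA (measure_union_null hDc ?_)
  rw [measure_biUnion_null_iff F.countable_toSet]
  exact fun s hs => hEs0 s (Finset.mem_coe.mp hs)
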